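/- (Theorem 7.1: the second-order Hessian quadratic form is rank one and is determined by Z_N'(gₙ).) Let n ∈ ℕ, let g > 2π be a real number with θ(g) = π·n, let N ∈ ℕ and a = (a₁,…,a_N) ∈ ℝ^N. Then Σ_{k₁=1}^N Σ_{k₂=1}^N ((−1)^n/(log(g/(2π)))²) · [sin(log(k₁+1)·g)·log(g/(2π(k₁+1)²))/√(k₁+1)] · [sin(log(k₂+1)·g)·log(g/(2π(k₂+1)²))/√(k₂+1)] · a_{k₁} · a_{k₂} = 4·(−1)^n · ( Z_N'(g; a) / log(g/(2π)) )², where Z_N'(g; a) denotes the derivative at t = g of the map t ↦ Z_N(t; a), and where the double-sum entries are the mixed second partials ∂²Δₙ/∂a_{k₁}∂a_{k₂}(0) of the Gram discriminant computed in Proposition 7.2. -/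

import Mathlib

/-- The Riemann–Siegel theta function (approximate form):
`θ(t) = (t/2)·log(t/(2π)) − t/2 − π/8`. -/
noncomputable def rsTheta (t : ℝ) : ℝ :=
  t / 2 * Real.log (t / (2 * Real.pi)) - t / 2 - Real.pi / 8

/-- The `N`-th section
`Z_N(t; a) = cos(θ(t)) + Σ_{k=1}^N (aₖ/√(k+1))·cos(θ(t) − log(k+1)·t)`,
with `a : Fin N → ℝ` and the coordinate `k : Fin N` playing the role of the
paper's index `k+1 = k.val + 2`. -/
noncomputable def sectionZ (N : ℕ) (t : ℝ) (a : Fin N → ℝ) : ℝ :=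
  Real.cos (rsTheta t) +
    ∑ k : Fin N, a k / Real.sqrt ((k : ℕ) + 2) *
      Real.cos (rsTheta t - Real.log ((k : ℕ) + 2) * t)

lemma hasDerivAt_rsTheta {g : ℝ} (hg : 0 < g) :
    HasDerivAt rsTheta (Real.log (g / (2 * Real.pi)) / 2) g := by
  have h2pi : (2 * Real.pi) ≠ 0 := by positivity
  have hgne : g ≠ 0 := ne_of_gt hg
  have hdiv : g / (2 * Real.pi) ≠ 0 := div_ne_zero hgne h2pi
  have hlog : HasDerivAt (fun t => Real.log (t / (2 * Real.pi)))
      ((1 / (2 * Real.pi)) / (g / (2 * Real.pi))) g := by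
    have := ((hasDerivAt_id g).div_const (2 * Real.pi)).log hdiv
    simpa using this
  have h := ((((hasDerivAt_id g).div_const 2).mul hlog).sub
      ((hasDerivAt_id g).div_const 2)).sub_const (Real.pi / 8)
  refine h.congr_deriv ?_
  simp only [id]
  field_simp
  ring

/-- Theorem 7.1: the second-order Hessian quadratic form of the Gram discriminant
(whose entries are the mixed second partials computed in Proposition 7.2) is rank
one and equals `4·(−1)^n·(Z_N'(g; a)/log(g/(2π)))²`, where `Z_N'(g; a)` is the
derivative at `t = g` of `t ↦ Z_N(t; a)`. -/
theorem hessian_quadratic_form_rank_one (n : ℕ) (g : ℝ)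
    (hg : 2 * Real.pi < g) (hGram : rsTheta g = Real.pi * n)
    (N : ℕ) (a : Fin N → ℝ) :
    ∑ k₁ : Fin N, ∑ k₂ : Fin N,
      ((-1 : ℝ) ^ n / (Real.log (g / (2 * Real.pi))) ^ 2) *
        (Real.sin (Real.log ((k₁ : ℕ) + 2) * g) *
          Real.log (g / (2 * Real.pi * ((k₁ : ℕ) + 2) ^ 2)) /
            Real.sqrt ((k₁ : ℕ) + 2)) *
        (Real.sin (Real.log ((k₂ : ℕ) + 2) * g) *
          Real.log (g / (2 * Real.pi * ((k₂ : ℕ) + 2) ^ 2)) /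
            Real.sqrt ((k₂ : ℕ) + 2)) * a k₁ * a k₂ =
      4 * (-1 : ℝ) ^ n *
        (deriv (fun t => sectionZ N t a) g / Real.log (g / (2 * Real.pi))) ^ 2 := by
  have hpi : (0:ℝ) < Real.pi := Real.pi_pos
  have hg0 : 0 < g := lt_trans (by positivity) hg
  set L := Real.log (g / (2 * Real.pi)) with hL
  set s : Fin N → ℝ := fun k =>
    Real.sin (Real.log ((k : ℕ) + 2) * g) *
      Real.log (g / (2 * Real.pi * ((k : ℕ) + 2) ^ 2)) /
        Real.sqrt ((k : ℕ) + 2) with hs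
  have hθ := hasDerivAt_rsTheta hg0
  -- derivative of sectionZ
  have hD : HasDerivAt (fun t => sectionZ N t a)
      ((-1:ℝ)^n / 2 * ∑ k : Fin N, s k * a k) g := by
    have hterm : ∀ k : Fin N, HasDerivAt
        (fun t => a k / Real.sqrt ((k : ℕ) + 2) *
          Real.cos (rsTheta t - Real.log ((k : ℕ) + 2) * t))
        ((-1:ℝ)^n / 2 * (s k * a k)) g := by
      intro k
      have hk2 : (0:ℝ) < ((k : ℕ) : ℝ) + 2 := by positivity
      have hin : HasDerivAt (fun t => rsTheta t - Real.log ((k : ℕ) + 2) * t)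
          (L / 2 - Real.log ((k : ℕ) + 2)) g := by
        have := hθ.fun_sub ((hasDerivAt_id g).const_mul (Real.log ((k : ℕ) + 2)))
        simpa using this
      have h := (hin.cos).const_mul (a k / Real.sqrt ((k : ℕ) + 2))
      refine h.congr_deriv ?_
      -- compute the value
      have hsin : Real.sin (rsTheta g - Real.log ((k : ℕ) + 2) * g)
          = -((-1:ℝ)^n * Real.sin (Real.log ((k : ℕ) + 2) * g)) := by
        rw [hGram, mul_comm Real.pi (n:ℝ)]
        exact Real.sin_nat_mul_pi_sub _ n
      have hlogsplit : Real.log (g / (2 * Real.pi * ((k : ℕ) + 2) ^ 2))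
          = L - 2 * Real.log ((k : ℕ) + 2) := by
        rw [hL, Real.log_div (ne_of_gt hg0) (by positivity),
          Real.log_div (ne_of_gt hg0) (by positivity),
          Real.log_mul (by positivity) (by positivity), Real.log_pow]
        push_cast
        ring
      rw [hsin, hs]
      simp only
      rw [hlogsplit]
      have hsq : Real.sqrt ((k : ℕ) + 2) ≠ 0 := by positivity
      field_simp
    have hcos : HasDerivAt (fun t => Real.cos (rsTheta t)) 0 g := by
      have := hθ.cos
      have hsin0 : Real.sin (rsTheta g) = 0 := by
        rw [hGram, mul_comm]
        exact Real.sin_nat_mul_pi n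
      simpa [hsin0] using this
    have := hcos.fun_add (HasDerivAt.fun_sum (u := Finset.univ) (fun k _ => hterm k))
    simpa [sectionZ, Finset.mul_sum] using this
  rw [hD.deriv]
  -- now pure algebra
  have hgt1 : (1:ℝ) < g / (2 * Real.pi) := (one_lt_div (by positivity)).mpr hg
  have hLpos : 0 < L := Real.log_pos hgt1
  have he : ((-1:ℝ)^n)^2 = 1 := by
    rw [← pow_mul, mul_comm, pow_mul]; norm_num
  have key : ∑ k₁ : Fin N, ∑ k₂ : Fin N,
      ((-1 : ℝ) ^ n / L ^ 2) * s k₁ * s k₂ * a k₁ * a k₂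
      = ((-1:ℝ)^n / L ^ 2) * (∑ k : Fin N, s k * a k) ^ 2 := by
    rw [pow_two (∑ k : Fin N, s k * a k), Finset.sum_mul_sum, Finset.mul_sum]
    refine Finset.sum_congr rfl fun k₁ _ => ?_
    rw [Finset.mul_sum]
    refine Finset.sum_congr rfl fun k₂ _ => ?_
    ring
  rw [key]
  have hLne : L ≠ 0 := ne_of_gt hLpos
  set S := ∑ k : Fin N, s k * a k
  set e : ℝ := (-1)^n
  clear_value e
  field_simp
  linear_combination (-(4:ℝ) * S^2 * e) * he
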